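/- For every T > 0, the Gibbs distribution π_T(a) := exp(φ(a)/T)/Σ_{b∈𝒜} exp(φ(b)/T) satisfies detailed balance with respect to the log-linear learning transition matrix: π_T(a)·P_T^LLL(a, a′) = π_T(a′)·P_T^LLL(a′, a) for all a ≠ a′ in 𝒜. Consequently π_T is a stationary distribution of P_T^LLL: Σ_{a∈𝒜} π_T(a)·P_T^LLL(a, a′) = π_T(a′) for every a′ ∈ 𝒜. -/

import Mathlib

open Finset Real Filter Topology

variable {n : ℕ} {A : Fin n → Type*}

section Defs
variable [∀ i, Fintype (A i)] [∀ i, DecidableEq (A i)] [∀ i, Nonempty (A i)]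

/-- `a` and `b` differ in exactly coordinate `i`. -/
def Neighbor (a b : ∀ i, A i) (i : Fin n) : Prop :=
  a i ≠ b i ∧ ∀ j, j ≠ i → a j = b j

instance (a b : ∀ i, A i) (i : Fin n) : Decidable (Neighbor a b i) :=
  inferInstanceAs (Decidable (_ ∧ _))

/-- `φ` is a potential function for the game with utilities `U`. -/
def IsPotential (U : Fin n → (∀ i, A i) → ℝ) (φ : (∀ i, A i) → ℝ) : Prop :=
  ∀ (i : Fin n) (a : ∀ j, A j) (α α' : A i),
    U i (Function.update a i α) - U i (Function.update a i α')
      = φ (Function.update a i α) - φ (Function.update a i α')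

/-- Best attainable utility of player `i` against `a₋ᵢ`. -/
noncomputable def bestVal (U : Fin n → (∀ i, A i) → ℝ) (i : Fin n) (a : ∀ j, A j) : ℝ :=
  Finset.univ.sup' Finset.univ_nonempty fun β : A i => U i (Function.update a i β)

open Classical in
/-- Best response set of player `i` against `a₋ᵢ`. -/
noncomputable def BR (U : Fin n → (∀ i, A i) → ℝ) (i : Fin n) (a : ∀ j, A j) : Finset (A i) :=
  Finset.univ.filter fun β => U i (Function.update a i β) = bestVal U i a

/-- Metropolis learning transition cost. -/
noncomputable def VML (U : Fin n → (∀ i, A i) → ℝ) (a b : ∀ i, A i) : ℝ :=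
  ∑ i, if a i ≠ b i then max (U i a - U i b) 0 else 0

/-- Log-linear learning transition cost. -/
noncomputable def VLLL (U : Fin n → (∀ i, A i) → ℝ) (a b : ∀ i, A i) : ℝ :=
  ∑ i, if a i ≠ b i then bestVal U i a - U i b else 0

noncomputable def PMLoff (U : Fin n → (∀ i, A i) → ℝ) (T : ℝ) (a b : ∀ i, A i) : ℝ :=
  ∑ i, if Neighbor a b i then
    (1 / ((n : ℝ) * (Fintype.card (A i) : ℝ))) * Real.exp (-(max (U i a - U i b) 0) / T)
  else 0

/-- Metropolis learning transition matrix. -/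
noncomputable def PML (U : Fin n → (∀ i, A i) → ℝ) (T : ℝ) (a b : ∀ i, A i) : ℝ :=
  if a = b then 1 - ∑ c, PMLoff U T a c else PMLoff U T a b

noncomputable def PLLLoff (U : Fin n → (∀ i, A i) → ℝ) (T : ℝ) (a b : ∀ i, A i) : ℝ :=
  ∑ i, if Neighbor a b i then
    (1 / (n : ℝ)) * Real.exp (U i b / T) / ∑ β : A i, Real.exp (U i (Function.update a i β) / T)
  else 0

/-- Log-linear learning transition matrix. -/
noncomputable def PLLL (U : Fin n → (∀ i, A i) → ℝ) (T : ℝ) (a b : ∀ i, A i) : ℝ :=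
  if a = b then 1 - ∑ c, PLLLoff U T a c else PLLLoff U T a b

/-- The normalizing constant `Z_i(a₋ᵢ)`. -/
noncomputable def Zi (U : Fin n → (∀ i, A i) → ℝ) (T : ℝ) (i : Fin n) (a : ∀ j, A j) : ℝ :=
  ∑ β : A i, Real.exp (-(bestVal U i a - U i (Function.update a i β)) / T)

/-- The Gibbs distribution. -/
noncomputable def gibbs (φ : (∀ i, A i) → ℝ) (T : ℝ) (a : ∀ i, A i) : ℝ :=
  Real.exp (φ a / T) / ∑ b, Real.exp (φ b / T)

/-- Nash equilibrium. -/
def IsNash (U : Fin n → (∀ i, A i) → ℝ) (a : ∀ i, A i) : Prop :=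
  ∀ (i : Fin n) (α : A i), U i (Function.update a i α) ≤ U i a

/-- No player is ever indifferent between two of its own actions. -/
def TieFree (U : Fin n → (∀ i, A i) → ℝ) : Prop :=
  ∀ (i : Fin n) (a : ∀ j, A j) (α α' : A i), α ≠ α' →
    U i (Function.update a i α) ≠ U i (Function.update a i α')

/-- `ω 0, ω 1, …, ω p` is a path: pairwise-distinct entries, consecutive entries neighbors. -/
def IsPath (ω : ℕ → ∀ i, A i) (p : ℕ) : Prop :=
  (∀ k ≤ p, ∀ l ≤ p, ω k = ω l → k = l) ∧ ∀ k < p, ∃ i, Neighbor (ω k) (ω (k + 1)) i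

/-- Zero-cost paths from `a` to the set `B` w.r.t. the cost `V`, encoded as (length, path). -/
def ZPaths (V : (∀ i, A i) → (∀ i, A i) → ℝ) (a : ∀ i, A i) (B : Set (∀ i, A i)) :
    Set (ℕ × (ℕ → ∀ i, A i)) :=
  {q | IsPath q.2 q.1 ∧ q.2 0 = a ∧ q.2 q.1 ∈ B ∧ ∀ k < q.1, V (q.2 k) (q.2 (k + 1)) = 0}

/-- Minimal length of a zero-cost path from `a` to `B`. -/
noncomputable def minLen (V : (∀ i, A i) → (∀ i, A i) → ℝ) (a : ∀ i, A i)
    (B : Set (∀ i, A i)) : ℕ :=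
  sInf {p | ∃ ω, (p, ω) ∈ ZPaths V a B}

/-- Maximal length of a zero-cost path from `a` to `B`. -/
noncomputable def maxLen (V : (∀ i, A i) → (∀ i, A i) → ℝ) (a : ∀ i, A i)
    (B : Set (∀ i, A i)) : ℕ :=
  sSup {p | ∃ ω, (p, ω) ∈ ZPaths V a B}

/-- Communication altitude w.r.t. the cost `V` and potential `φ`. -/
noncomputable def Ac (V : (∀ i, A i) → (∀ i, A i) → ℝ) (φ : (∀ i, A i) → ℝ)
    (x y : ∀ i, A i) : ℝ :=
  sSup {v | ∃ (p : ℕ) (ω : ℕ → ∀ i, A i), 0 < p ∧ IsPath ω p ∧ ω 0 = x ∧ ω p = y ∧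
    v = ⨅ k : Fin p, (φ (ω k) - V (ω k) (ω (k + 1)))}

/-- `max_i |A_i|`. -/
noncomputable def mMax (A : Fin n → Type*) [∀ i, Fintype (A i)] : ℕ :=
  ⨆ i : Fin n, Fintype.card (A i)

/-- `min_i |A_i|`. -/
noncomputable def mMin (A : Fin n → Type*) [∀ i, Fintype (A i)] : ℕ :=
  ⨅ i : Fin n, Fintype.card (A i)

/-- `Z_max(T)`. -/
noncomputable def Zmax (U : Fin n → (∀ i, A i) → ℝ) (T : ℝ) : ℝ :=
  ⨆ i : Fin n, ⨆ a : ∀ j, A j, Zi U T i a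

noncomputable def GammaML (A : Fin n → Type*) [∀ i, Fintype (A i)] : ℝ :=
  1 / ((n : ℝ) * (mMax A : ℝ))

noncomputable def GammaLLL (U : Fin n → (∀ i, A i) → ℝ) (T : ℝ) : ℝ :=
  1 / ((n : ℝ) * Zmax U T)


/-- The Gibbs distribution satisfies detailed balance w.r.t. the log-linear
learning transition matrix, and is consequently a stationary distribution of it. -/
theorem statement3 (hn : 0 < n)
    (U : Fin n → (∀ i, A i) → ℝ) (φ : (∀ i, A i) → ℝ) (hpot : IsPotential U φ) :
    ∀ T > (0 : ℝ),
      (∀ a b : ∀ i, A i, a ≠ b →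
        gibbs φ T a * PLLL U T a b = gibbs φ T b * PLLL U T b a)
      ∧ ∀ b : ∀ i, A i, ∑ a, gibbs φ T a * PLLL U T a b = gibbs φ T b := by
  intro T hT
  have db : ∀ a b : ∀ i, A i, a ≠ b →
      gibbs φ T a * PLLL U T a b = gibbs φ T b * PLLL U T b a := by
    intro a b hab
    unfold PLLL
    rw [if_neg hab, if_neg (Ne.symm hab)]
    unfold PLLLoff
    rw [Finset.mul_sum, Finset.mul_sum]
    apply Finset.sum_congr rfl
    intro i _
    by_cases hN : Neighbor a b i
    · have hN' : Neighbor b a i := ⟨hN.1.symm, fun j hj => (hN.2 j hj).symm⟩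
      rw [if_pos hN, if_pos hN']
      have hupd : ∀ β : A i, Function.update a i β = Function.update b i β := by
        intro β; funext j
        rcases eq_or_ne j i with rfl | hj
        · simp
        · simp [Function.update_of_ne hj, hN.2 j hj]
      have hZ : ∑ β : A i, Real.exp (U i (Function.update a i β) / T)
          = ∑ β : A i, Real.exp (U i (Function.update b i β) / T) := by
        exact Finset.sum_congr rfl fun β _ => by rw [hupd β]
      have hb : Function.update a i (b i) = b := by
        funext j
        rcases eq_or_ne j i with rfl | hj
        · simp
        · simp [Function.update_of_ne hj, hN.2 j hj]
      have hpoteq : φ a + U i b = φ b + U i a := by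
        have h := hpot i a (a i) (b i)
        rw [Function.update_eq_self, hb] at h
        linarith
      have key : Real.exp (φ a / T) * Real.exp (U i b / T)
          = Real.exp (φ b / T) * Real.exp (U i a / T) := by
        rw [← Real.exp_add, ← Real.exp_add]
        congr 1
        rw [← add_div, ← add_div, hpoteq]
      simp only [gibbs]
      rw [hZ]
      set S := ∑ c, Real.exp (φ c / T)
      set Z := ∑ β : A i, Real.exp (U i (Function.update b i β) / T)
      have rearr : ∀ X Y : ℝ, X / S * (1 / (n : ℝ) * Y / Z)
          = (X * Y) * (1 / (n : ℝ) / (S * Z)) := by intro X Y; ring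
      rw [rearr, rearr, key]
    · have hN' : ¬ Neighbor b a i := fun h => hN ⟨h.1.symm, fun j hj => (h.2 j hj).symm⟩
      rw [if_neg hN, if_neg hN']
      ring
  refine ⟨db, fun b => ?_⟩
  have hbb : PLLLoff U T b b = 0 :=
    Finset.sum_eq_zero fun i _ => by simp [Neighbor]
  have hsum : ∑ a, PLLL U T b a = 1 := by
    classical
    have h1 : ∑ a, PLLL U T b a
        = PLLL U T b b + ∑ a ∈ Finset.univ.erase b, PLLL U T b a :=
      (Finset.add_sum_erase _ _ (Finset.mem_univ b)).symm
    have h2 : ∑ a ∈ Finset.univ.erase b, PLLL U T b a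
        = ∑ a ∈ Finset.univ.erase b, PLLLoff U T b a := by
      apply Finset.sum_congr rfl
      intro a ha
      exact if_neg (fun h => (Finset.ne_of_mem_erase ha) h.symm)
    have h3 : ∑ a ∈ Finset.univ.erase b, PLLLoff U T b a
        = ∑ a, PLLLoff U T b a :=
      Finset.sum_erase _ hbb
    have h4 : PLLL U T b b = 1 - ∑ c, PLLLoff U T b c := if_pos rfl
    rw [h1, h2, h3, h4]
    ring
  calc ∑ a, gibbs φ T a * PLLL U T a b
      = ∑ a, gibbs φ T b * PLLL U T b a := by
        refine Finset.sum_congr rfl fun a _ => ?_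
        rcases eq_or_ne a b with rfl | h
        · rfl
        · exact db a b h
    _ = gibbs φ T b * ∑ a, PLLL U T b a := by rw [Finset.mul_sum]
    _ = gibbs φ T b := by rw [hsum, mul_one]

end Defs
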